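/- arXiv:2309.09491 — 2 statements merged into one kernel-verified Lean document; each statement's English description precedes it below -/
import Mathlib

section
/- Let p be a prime with p ≥ 5. Then ∑_{r odd, 1 ≤ r < p} binomial(p, r)/(p·r) ≡ 0 (mod p). -/
/-- Rational congruence: `x ≡ y (mod m)` means that `x - y`, written in lowest
terms, has numerator divisible by `m`. -/
def ratModEq (m : ℕ) (x y : ℚ) : Prop := (m : ℤ) ∣ (x - y).num

lemma choose_sub_one_cast (p : ℕ) (hp : p.Prime) :
    ∀ k, k < p → (((p-1).choose k : ZMod p)) = (-1)^k := by
  intro k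
  induction k with
  | zero => simp
  | succ n ih =>
    intro hk
    have hn : n < p := Nat.lt_of_succ_lt hk
    have h0 : ((p.choose (n+1) : ZMod p)) = 0 := by
      rw [ZMod.natCast_eq_zero_iff]
      exact hp.dvd_choose_self (Nat.succ_ne_zero n) hk
    have hsum : (p-1).choose n + (p-1).choose (n+1) = p.choose (n+1) := by
      conv_rhs => rw [← Nat.succ_pred_eq_of_pos hp.pos]
      rw [Nat.choose_succ_succ]
      rfl
    have := congrArg (fun m : ℕ => (m : ZMod p)) hsum
    push_cast at this
    rw [h0, ih hn] at this
    have h1 : ((p-1).choose (n+1) : ZMod p) = -(-1)^n := by linear_combination this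
    rw [h1, pow_succ]
    ring

lemma sum_sq_zmod (p : ℕ) [NeZero p] (hp : p.Prime) (hp5 : 5 ≤ p) :
    ∑ x : ZMod p, x^2 = 0 := by
  haveI : Fact p.Prime := ⟨hp⟩
  have hcard : Fintype.card (ZMod p) = p := ZMod.card p
  have := FiniteField.sum_pow_lt_card_sub_one (K := ZMod p) 2 (by omega)
  exact this

lemma odd_inv_sq_sum (p : ℕ) (hp : p.Prime) (hp5 : 5 ≤ p) :
    ∑ r ∈ (Finset.Icc 1 (p-1)).filter (fun r => Odd r), ((r : ZMod p)⁻¹)^2 = 0 := by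
  haveI : Fact p.Prime := ⟨hp⟩
  haveI : NeZero p := ⟨hp.ne_zero⟩
  have hpodd : Odd p := hp.odd_of_ne_two (by omega)
  have hne : ∀ r ∈ Finset.Icc 1 (p-1), (r : ZMod p) ≠ 0 := by
    intro r hr
    rw [Finset.mem_Icc] at hr
    rw [Ne, ZMod.natCast_eq_zero_iff]
    intro h
    have := Nat.le_of_dvd (by omega) h
    omega
  have hval : ∀ r ∈ Finset.Icc 1 (p-1), (((p - r : ℕ) : ZMod p)⁻¹)^2 = ((r : ZMod p)⁻¹)^2 := by
    intro r hr
    rw [Finset.mem_Icc] at hr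
    have : ((p - r : ℕ) : ZMod p) = -(r : ZMod p) := by
      rw [Nat.cast_sub (by omega), ZMod.natCast_self, zero_sub]
    rw [this, inv_neg, neg_sq]
  -- total sum is zero
  have hT : ∑ r ∈ Finset.Icc 1 (p-1), ((r : ZMod p)⁻¹)^2 = 0 := by
    have e1 : ∑ r ∈ Finset.Icc 1 (p-1), ((r : ZMod p)⁻¹)^2
        = ∑ x ∈ Finset.univ.erase (0 : ZMod p), (x⁻¹)^2 := by
      refine Finset.sum_nbij' (fun r => (r : ZMod p)) (fun x => x.val) ?_ ?_ ?_ ?_ ?_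
      · intro r hr
        exact Finset.mem_erase.2 ⟨hne r hr, Finset.mem_univ _⟩
      · intro x hx
        rw [Finset.mem_erase] at hx
        rw [Finset.mem_Icc]
        have h1 : x.val ≠ 0 := fun h => hx.1 ((ZMod.val_eq_zero x).1 h)
        have h2 : x.val < p := ZMod.val_lt x
        omega
      · intro r hr
        rw [Finset.mem_Icc] at hr
        exact ZMod.val_cast_of_lt (by omega)
      · intro x hx
        exact ZMod.natCast_zmod_val x
      · intro r hr
        rfl
    have e2 : ∑ x ∈ Finset.univ.erase (0 : ZMod p), (x⁻¹)^2
        = ∑ x ∈ Finset.univ.erase (0 : ZMod p), x^2 := by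
      refine Finset.sum_nbij' (fun x => x⁻¹) (fun x => x⁻¹) ?_ ?_ ?_ ?_ ?_
      · intro x hx
        rw [Finset.mem_erase] at hx ⊢
        exact ⟨inv_ne_zero hx.1, Finset.mem_univ _⟩
      · intro x hx
        rw [Finset.mem_erase] at hx ⊢
        exact ⟨inv_ne_zero hx.1, Finset.mem_univ _⟩
      · intro x _; exact inv_inv x
      · intro x _; exact inv_inv x
      · intro x _; rfl
    have e3 : ∑ x ∈ Finset.univ.erase (0 : ZMod p), x^2 = ∑ x : ZMod p, x^2 :=
      Finset.sum_erase _ (by norm_num)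
    rw [e1, e2, e3, sum_sq_zmod p hp hp5]
  -- odd part equals even part
  have hOE : ∑ r ∈ (Finset.Icc 1 (p-1)).filter (fun r => Odd r), ((r : ZMod p)⁻¹)^2
      = ∑ r ∈ (Finset.Icc 1 (p-1)).filter (fun r => ¬ Odd r), ((r : ZMod p)⁻¹)^2 := by
    refine Finset.sum_nbij' (fun r => p - r) (fun r => p - r) ?_ ?_ ?_ ?_ ?_
    · intro r hr
      rw [Finset.mem_filter, Finset.mem_Icc] at hr ⊢
      obtain ⟨⟨h1, h2⟩, hodd⟩ := hr
      refine ⟨⟨by omega, by omega⟩, ?_⟩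
      rw [Nat.not_odd_iff_even]
      exact Nat.Odd.sub_odd hpodd hodd
    · intro r hr
      rw [Finset.mem_filter, Finset.mem_Icc] at hr ⊢
      obtain ⟨⟨h1, h2⟩, heven⟩ := hr
      rw [Nat.not_odd_iff_even] at heven
      refine ⟨⟨by omega, by omega⟩, ?_⟩
      exact Nat.Odd.sub_even (by omega) hpodd heven
    · intro r hr
      rw [Finset.mem_filter, Finset.mem_Icc] at hr
      omega
    · intro r hr
      rw [Finset.mem_filter, Finset.mem_Icc] at hr
      omega
    · intro r hr
      rw [Finset.mem_filter] at hr
      exact (hval r hr.1).symm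
  have hsplit := Finset.sum_filter_add_sum_filter_not (Finset.Icc 1 (p-1))
    (fun r => Odd r) (fun r => ((r : ZMod p)⁻¹)^2)
  rw [hT] at hsplit
  rw [← hOE] at hsplit
  have h2 : (2 : ZMod p) ≠ 0 := by
    rw [Ne, show (2 : ZMod p) = ((2 : ℕ) : ZMod p) by norm_num,
      ZMod.natCast_eq_zero_iff]
    intro h
    have := Nat.le_of_dvd (by omega) h
    omega
  have : (2 : ZMod p) * ∑ r ∈ (Finset.Icc 1 (p-1)).filter (fun r => Odd r),
      ((r : ZMod p)⁻¹)^2 = 0 := by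
    rw [two_mul]; exact hsplit
  rcases mul_eq_zero.1 this with h | h
  · exact absurd h h2
  · exact h

theorem binomial_odd_sum_vanishes (p : ℕ) (hp : p.Prime) (hp5 : 5 ≤ p) :
    ratModEq p
      (∑ r ∈ (Finset.Icc 1 (p - 1)).filter (fun r => Odd r),
        (p.choose r : ℚ) / (p * r)) 0 := by
  haveI : Fact p.Prime := ⟨hp⟩
  haveI : NeZero p := ⟨hp.ne_zero⟩
  set F := (Finset.Icc 1 (p - 1)).filter (fun r => Odd r) with hF
  set S : ℚ := ∑ r ∈ F, (p.choose r : ℚ) / (p * r) with hS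
  set A : ℕ := ∑ r ∈ F, (p.choose r / p) * ((Nat.factorial (p-1)) / r) with hA
  have hmem : ∀ r ∈ F, 1 ≤ r ∧ r ≤ p - 1 ∧ Odd r := by
    intro r hr
    rw [hF, Finset.mem_filter, Finset.mem_Icc] at hr
    tauto
  have hcd : ∀ r ∈ F, p * (p.choose r / p) = p.choose r := by
    intro r hr
    obtain ⟨h1, h2, _⟩ := hmem r hr
    exact Nat.mul_div_cancel' (hp.dvd_choose_self (by omega) (by omega))
  have hqd : ∀ r ∈ F, r * ((Nat.factorial (p-1)) / r) = (Nat.factorial (p-1)) := by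
    intro r hr
    obtain ⟨h1, h2, _⟩ := hmem r hr
    exact Nat.mul_div_cancel' (Nat.dvd_factorial (by omega) (by omega))
  -- Step 1 : S * (Nat.factorial (p-1)) = A in ℚ
  have hSA : S * ((Nat.factorial (p-1)) : ℚ) = (A : ℚ) := by
    rw [hS, hA, Finset.sum_mul]
    push_cast
    refine Finset.sum_congr rfl ?_
    intro r hr
    obtain ⟨h1, h2, _⟩ := hmem r hr
    have e1 : ((p.choose r : ℚ)) = (p : ℚ) * ((p.choose r / p : ℕ) : ℚ) := by
      exact_mod_cast (hcd r hr).symm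
    have e2 : (((Nat.factorial (p-1)) : ℚ)) = (r : ℚ) * (((Nat.factorial (p-1)) / r : ℕ) : ℚ) := by
      exact_mod_cast (hqd r hr).symm
    rw [e1, e2]
    have hp0 : (p : ℚ) ≠ 0 := Nat.cast_ne_zero.2 hp.ne_zero
    have hr0 : (r : ℚ) ≠ 0 := Nat.cast_ne_zero.2 (by omega)
    field_simp
  -- Step 2 : A ≡ 0 mod p
  have hAzero : (A : ZMod p) = 0 := by
    have hcast : ((A : ℕ) : ZMod p)
        = ∑ r ∈ F, ((p.choose r / p : ℕ) : ZMod p) * (((Nat.factorial (p-1)) / r : ℕ) : ZMod p) := by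
      rw [hA]; push_cast; rfl
    have hterm : ∀ r ∈ F,
        ((p.choose r / p : ℕ) : ZMod p) * (((Nat.factorial (p-1)) / r : ℕ) : ZMod p)
          = -(((r : ZMod p))⁻¹)^2 := by
      intro r hr
      obtain ⟨h1, h2, hodd⟩ := hmem r hr
      have hrne : (r : ZMod p) ≠ 0 := by
        rw [Ne, ZMod.natCast_eq_zero_iff]
        intro h
        have := Nat.le_of_dvd (by omega) h
        omega
      -- the c-part
      have key : p * ((p-1).choose (r-1)) = p.choose r * r := by
        have h := Nat.add_one_mul_choose_eq (p-1) (r-1)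
        have e : p - 1 + 1 = p := by omega
        have e' : r - 1 + 1 = r := by omega
        simp only [Nat.succ_eq_add_one, e, e'] at h
        exact h
      have hcnat : r * (p.choose r / p) = (p-1).choose (r-1) := by
        have : p * (r * (p.choose r / p)) = p * ((p-1).choose (r-1)) := by
          calc p * (r * (p.choose r / p)) = r * (p * (p.choose r / p)) := by ring
            _ = r * p.choose r := by rw [hcd r hr]
            _ = p.choose r * r := mul_comm _ _
            _ = p * ((p-1).choose (r-1)) := key.symm
        exact Nat.eq_of_mul_eq_mul_left hp.pos this
      have hbin : (((p-1).choose (r-1) : ℕ) : ZMod p) = 1 := by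
        rw [choose_sub_one_cast p hp (r-1) (by omega)]
        exact (Nat.Odd.sub_odd hodd odd_one).neg_one_pow
      have hc : ((p.choose r / p : ℕ) : ZMod p) = ((r : ZMod p))⁻¹ := by
        have := congrArg (fun m : ℕ => (m : ZMod p)) hcnat
        push_cast at this
        rw [hbin] at this
        exact (inv_eq_of_mul_eq_one_right this).symm
      -- the q-part
      have hq : (((Nat.factorial (p-1)) / r : ℕ) : ZMod p) = -((r : ZMod p))⁻¹ := by
        have := congrArg (fun m : ℕ => (m : ZMod p)) (hqd r hr)
        push_cast at this
        rw [ZMod.wilsons_lemma] at this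
        apply mul_left_cancel₀ hrne
        rw [this, mul_neg, mul_inv_cancel₀ hrne]
      rw [hc, hq]
      ring
    rw [hcast, Finset.sum_congr rfl hterm, Finset.sum_neg_distrib,
      hF, odd_inv_sq_sum p hp hp5, neg_zero]
  -- Step 3 : conclude
  show (p : ℤ) ∣ (S - 0).num
  rw [sub_zero]
  have hpA : (p : ℤ) ∣ (A : ℤ) :=
    Int.natCast_dvd_natCast.2 ((ZMod.natCast_eq_zero_iff A p).1 hAzero)
  have hZ : S.num * ((Nat.factorial (p-1)) : ℤ) = (A : ℤ) * (S.den : ℤ) := by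
    have hs : S = (S.num : ℚ) / (S.den : ℚ) := (Rat.num_div_den S).symm
    rw [hs] at hSA
    have hd : (S.den : ℚ) ≠ 0 := Nat.cast_ne_zero.2 S.den_nz
    field_simp at hSA
    rw [mul_comm (A : ℤ)]; exact_mod_cast hSA
  have hppr : Prime (p : ℤ) := Nat.prime_iff_prime_int.mp hp
  have hdvd : (p : ℤ) ∣ S.num * ((Nat.factorial (p-1)) : ℤ) := by
    rw [hZ]; exact hpA.mul_right _
  rcases hppr.dvd_mul.1 hdvd with h | h
  · exact h
  · exfalso
    rw [Int.natCast_dvd_natCast, hp.dvd_factorial] at h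
    omega
end

section
/- Let n and j be positive integers with 1 ≤ j ≤ n. Then ∑_{l=0}^{j-1} (-1)^(j-l-1) · binomial(n-l-1, n-j) · binomial(n, l) · 1/(n-l)^2 = (H_n − H_{n-j})^2 / 2 + (H_n^{(2)} − H_{n-j}^{(2)}) / 2. -/
open Finset

/-- `harmonic' r k` is the `k`-th harmonic number of order `r`, i.e. `∑_{i=1}^k 1/i^r`. -/
def harmonic' (r k : ℕ) : ℚ := ∑ i ∈ Finset.Icc 1 k, 1 / (i : ℚ) ^ r

lemma harmonic'_succ (r k : ℕ) :
    harmonic' r (k + 1) = harmonic' r k + 1 / ((k : ℚ) + 1) ^ r := by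
  unfold harmonic'
  rw [Finset.sum_Icc_succ_top (by omega)]
  push_cast
  ring

lemma sumV (m N : ℕ) (h : m < N) :
    ∑ k ∈ Finset.Icc m N, (-1:ℚ)^(k-m) * (k.choose m : ℚ) * (N.choose k : ℚ) = 0 := by
  rw [show Finset.Icc m N = Finset.Ico m (N+1) by rw [Finset.Ico_add_one_right_eq_Icc],
    Finset.sum_Ico_eq_sum_range]
  rw [show N + 1 - m = (N - m) + 1 by omega]
  have key : ∀ i ∈ Finset.range (N - m + 1),
      (-1:ℚ)^(m + i - m) * ((m+i).choose m : ℚ) * (N.choose (m+i) : ℚ)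
        = (N.choose m : ℚ) * ((-1:ℚ)^i * (((N-m).choose i : ℕ) : ℚ)) := by
    intro i hi
    rw [Finset.mem_range] at hi
    have h1 : m + i ≤ N := by omega
    have h2 : N.choose (m+i) * (m+i).choose m = N.choose m * (N-m).choose (m+i-m) :=
      Nat.choose_mul (Nat.le_add_right m i)
    rw [show m + i - m = i by omega] at h2 ⊢
    have h3 : (N.choose (m+i) : ℚ) * ((m+i).choose m : ℚ)
        = (N.choose m : ℚ) * ((N-m).choose i : ℚ) := by exact_mod_cast h2
    linear_combination (-1:ℚ)^i * h3
  rw [Finset.sum_congr rfl key, ← Finset.mul_sum]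
  have hI : (∑ i ∈ Finset.range (N - m + 1), ((-1)^i * ((N-m).choose i) : ℤ)) = 0 :=
    Int.alternating_sum_range_choose_of_ne (by omega)
  have h4 : ((∑ i ∈ Finset.range (N - m + 1), ((-1)^i * ((N-m).choose i) : ℤ) : ℤ) : ℚ) = 0 := by
    rw [hI]; norm_num
  push_cast at h4
  rw [h4, mul_zero]

lemma sumV' (m N : ℕ) (h : m < N) :
    ∑ k ∈ Finset.Ioc m (N+1), (-1:ℚ)^(k-m-1) * ((k-1).choose m : ℚ) * (N.choose (k-1) : ℚ) = 0 := by
  rw [show Finset.Ioc m (N+1) = Finset.Ico (m+1) (N+2) by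
      ext x; simp [Nat.lt_succ_iff],
    Finset.sum_Ico_eq_sum_range]
  rw [← sumV m N h, show Finset.Icc m N = Finset.Ico m (N+1) by rw [Finset.Ico_add_one_right_eq_Icc],
    Finset.sum_Ico_eq_sum_range]
  rw [show N + 2 - (m+1) = N + 1 - m by omega]
  refine Finset.sum_congr rfl fun i hi => ?_
  rw [show m + 1 + i - m - 1 = m + i - m by omega, show m + 1 + i - 1 = m + i by omega]

lemma sumU (m : ℕ) : ∀ N, m < N →
    ∑ k ∈ Finset.Ioc m N, (-1:ℚ)^(k-m-1) * ((k-1).choose m : ℚ) * (N.choose k : ℚ) = 1 := by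
  intro N
  induction N with
  | zero => omega
  | succ N ih =>
    intro h
    rcases Nat.lt_or_ge m N with hN | hN
    · -- inductive case: m < N
      have split : ∀ k ∈ Finset.Ioc m (N+1),
          (-1:ℚ)^(k-m-1) * ((k-1).choose m : ℚ) * (((N+1).choose k : ℕ) : ℚ)
          = (-1:ℚ)^(k-m-1) * ((k-1).choose m : ℚ) * (N.choose (k-1) : ℚ)
            + (-1:ℚ)^(k-m-1) * ((k-1).choose m : ℚ) * (N.choose k : ℚ) := by
        intro k hk
        rw [Finset.mem_Ioc] at hk
        have hp : (N+1).choose k = N.choose (k-1) + N.choose k := by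
          obtain ⟨k', rfl⟩ : ∃ k', k = k' + 1 := ⟨k-1, by omega⟩
          simp [Nat.choose_succ_succ]
        rw [hp]
        push_cast
        ring
      rw [Finset.sum_congr rfl split, Finset.sum_add_distrib, sumV' m N hN,
        Finset.sum_Ioc_succ_top (by omega), ih hN]
      simp [Nat.choose_succ_self]
    ·
      have hNm : N = m := by omega
      subst hNm
      rw [Nat.Ioc_succ_singleton, Finset.sum_singleton]
      rw [show N + 1 - N - 1 = 0 by omega, show N + 1 - 1 = N by omega]
      simp

lemma sumT (m : ℕ) : ∀ N, m < N →
    ∑ k ∈ Finset.Ioc m N, (-1:ℚ)^(k-m-1) * ((k-1).choose m : ℚ) * (N.choose k : ℚ) / (k:ℚ)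
      = harmonic' 1 N - harmonic' 1 m := by
  intro N
  induction N with
  | zero => omega
  | succ N ih =>
    intro h
    rcases Nat.lt_or_ge m N with hN | hN
    · have split : ∀ k ∈ Finset.Ioc m (N+1),
          (-1:ℚ)^(k-m-1) * ((k-1).choose m : ℚ) * (((N+1).choose k : ℕ) : ℚ) / (k:ℚ)
          = (1/((N:ℚ)+1)) * ((-1:ℚ)^(k-m-1) * ((k-1).choose m : ℚ) * (((N+1).choose k : ℕ) : ℚ))
            + (-1:ℚ)^(k-m-1) * ((k-1).choose m : ℚ) * (N.choose k : ℚ) / (k:ℚ) := by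
        intro k hk
        rw [Finset.mem_Ioc] at hk
        have hp : (N+1).choose k = N.choose (k-1) + N.choose k := by
          obtain ⟨k', rfl⟩ : ∃ k', k = k' + 1 := ⟨k-1, by omega⟩
          simp [Nat.choose_succ_succ]
        have hc : (N+1) * N.choose (k-1) = (N+1).choose k * k := by
          obtain ⟨k', rfl⟩ : ∃ k', k = k' + 1 := ⟨k-1, by omega⟩
          simpa using Nat.add_one_mul_choose_eq N k'
        have hcq : ((N:ℚ)+1) * (N.choose (k-1) : ℚ) = (((N+1).choose k : ℕ) : ℚ) * (k:ℚ) := by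
          exact_mod_cast hc
        have hk0 : (k:ℚ) ≠ 0 := by
          have : (0:ℕ) < k := by omega
          positivity
        have hN0 : (N:ℚ) + 1 ≠ 0 := by positivity
        have hpq : (((N+1).choose k : ℕ) : ℚ) = (N.choose (k-1) : ℚ) + (N.choose k : ℚ) := by
          exact_mod_cast hp
        field_simp
        linear_combination (((k-1).choose m : ℚ)) *
          (hcq + ((N:ℚ)+1) * hpq)
      rw [Finset.sum_congr rfl split, Finset.sum_add_distrib, ← Finset.mul_sum,
        sumU m (N+1) h, Finset.sum_Ioc_succ_top (by omega), ih hN]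
      rw [harmonic'_succ]
      simp [Nat.choose_succ_self]
      ring
    · have hNm : N = m := by omega
      subst hNm
      rw [Nat.Ioc_succ_singleton, Finset.sum_singleton]
      rw [show N + 1 - N - 1 = 0 by omega, show N + 1 - 1 = N by omega, harmonic'_succ]
      push_cast
      simp

lemma sumS (m : ℕ) : ∀ N, m < N →
    ∑ k ∈ Finset.Ioc m N, (-1:ℚ)^(k-m-1) * ((k-1).choose m : ℚ) * (N.choose k : ℚ) / (k:ℚ)^2
      = (harmonic' 1 N - harmonic' 1 m)^2 / 2 + (harmonic' 2 N - harmonic' 2 m) / 2 := by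
  intro N
  induction N with
  | zero => omega
  | succ N ih =>
    intro h
    rcases Nat.lt_or_ge m N with hN | hN
    · have split : ∀ k ∈ Finset.Ioc m (N+1),
          (-1:ℚ)^(k-m-1) * ((k-1).choose m : ℚ) * (((N+1).choose k : ℕ) : ℚ) / (k:ℚ)^2
          = (1/((N:ℚ)+1)) * ((-1:ℚ)^(k-m-1) * ((k-1).choose m : ℚ) * (((N+1).choose k : ℕ) : ℚ) / (k:ℚ))
            + (-1:ℚ)^(k-m-1) * ((k-1).choose m : ℚ) * (N.choose k : ℚ) / (k:ℚ)^2 := by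
        intro k hk
        rw [Finset.mem_Ioc] at hk
        have hp : (N+1).choose k = N.choose (k-1) + N.choose k := by
          obtain ⟨k', rfl⟩ : ∃ k', k = k' + 1 := ⟨k-1, by omega⟩
          simp [Nat.choose_succ_succ]
        have hc : (N+1) * N.choose (k-1) = (N+1).choose k * k := by
          obtain ⟨k', rfl⟩ : ∃ k', k = k' + 1 := ⟨k-1, by omega⟩
          simpa using Nat.add_one_mul_choose_eq N k'
        have hcq : ((N:ℚ)+1) * (N.choose (k-1) : ℚ) = (((N+1).choose k : ℕ) : ℚ) * (k:ℚ) := by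
          exact_mod_cast hc
        have hk0 : (k:ℚ) ≠ 0 := by
          have : (0:ℕ) < k := by omega
          positivity
        have hN0 : (N:ℚ) + 1 ≠ 0 := by positivity
        have hpq : (((N+1).choose k : ℕ) : ℚ) = (N.choose (k-1) : ℚ) + (N.choose k : ℚ) := by
          exact_mod_cast hp
        field_simp
        linear_combination (((k-1).choose m : ℚ)) *
          (hcq + ((N:ℚ)+1) * hpq)
      rw [Finset.sum_congr rfl split, Finset.sum_add_distrib, ← Finset.mul_sum,
        sumT m (N+1) h, Finset.sum_Ioc_succ_top (by omega), ih hN]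
      rw [harmonic'_succ, harmonic'_succ]
      have hN0 : (N:ℚ) + 1 ≠ 0 := by positivity
      simp [Nat.choose_succ_self]
      field_simp
      ring
    · have hNm : N = m := by omega
      subst hNm
      rw [Nat.Ioc_succ_singleton, Finset.sum_singleton]
      rw [show N + 1 - N - 1 = 0 by omega, show N + 1 - 1 = N by omega,
        harmonic'_succ, harmonic'_succ]
      have hN0 : (N:ℚ) + 1 ≠ 0 := by positivity
      push_cast
      simp
      try field_simp
      try ring

theorem binomial_sum_inverse_square (n j : ℕ) (hj : 1 ≤ j) (hjn : j ≤ n) :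
    ∑ l ∈ Finset.range j,
        (-1 : ℚ) ^ (j - l - 1) * ((n - l - 1).choose (n - j) : ℚ) * (n.choose l : ℚ) *
          (1 / ((n - l : ℕ) : ℚ) ^ 2) =
      (harmonic' 1 n - harmonic' 1 (n - j)) ^ 2 / 2 +
        (harmonic' 2 n - harmonic' 2 (n - j)) / 2 := by
  have hm : n - j < n := by omega
  rw [← sumS (n - j) n hm]
  rw [show Finset.Ioc (n-j) n = Finset.Ico (n-j+1) (n+1) by
      ext x; simp [Nat.lt_succ_iff],
    Finset.sum_Ico_eq_sum_range,
    show n + 1 - (n - j + 1) = j by omega]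
  rw [← Finset.sum_range_reflect]
  refine Finset.sum_congr rfl fun i hi => ?_
  rw [Finset.mem_range] at hi
  rw [show j - (j - 1 - i) - 1 = i by omega,
    show n - (j - 1 - i) - 1 = n - j + 1 + i - 1 by omega,
    show n - j + 1 + i - (n - j) - 1 = i by omega,
    show (n - (j - 1 - i) : ℕ) = (n - j + 1 + i : ℕ) by omega]
  have hcs : n.choose (j - 1 - i) = n.choose (n - j + 1 + i) := by
    rw [show n - j + 1 + i = n - (j - 1 - i) by omega, Nat.choose_symm (by omega)]
  rw [hcs]
  ring
end
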